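/- Let n ≥ 2, σ₀ > 0, 0 < δ₀ ≤ l, and 0 ≤ ε ≤ n·σ₀²·δ₀²/(8(n−1)). Suppose σ : [−l, l] → ℝ is continuous with σ(t) ≥ σ₀ for |t| ≤ δ₀ and σ(t) ≥ −ε for all t, and f : [−l, l] → ℝ is C¹ with 2·f′(t) + n·f(t)² + σ(t)/(n−1) ≤ 0 for all t. Then l ≤ δ₀ + 8(n−1)/(n·σ₀·δ₀). -/

import Mathlib

/-- Blow-up lemma: if `f δ₀ ≤ -c` and `f' ≤ -n f²/2 + n c²/4` on `[δ₀, l]`,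
then `l ≤ δ₀ + 4/(n c)`. -/
lemma blowup_aux (n c δ₀ l : ℝ) (hn : 0 < n) (hc : 0 < c) (hδl : δ₀ ≤ l)
    (f f' : ℝ → ℝ)
    (hderiv : ∀ t ∈ Set.Icc δ₀ l, HasDerivAt f (f' t) t)
    (hbound : ∀ t ∈ Set.Icc δ₀ l, f' t ≤ -n * (f t) ^ 2 / 2 + n * c ^ 2 / 4)
    (h0 : f δ₀ ≤ -c) :
    l ≤ δ₀ + 4 / (n * c) := by
  have hfc : ContinuousOn f (Set.Icc δ₀ l) := fun t ht =>
    (hderiv t ht).continuousAt.continuousWithinAt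
  -- f stays ≤ -c on [δ₀, l]
  have key : ∀ t ∈ Set.Icc δ₀ l, f t ≤ -c := by
    have H := image_le_of_deriv_right_lt_deriv_boundary (B := fun _ : ℝ => -c)
      (B' := fun _ : ℝ => (0 : ℝ)) hfc
      (fun x hx => (hderiv x (Set.mem_Icc_of_Ico hx)).hasDerivWithinAt)
      h0 (fun x => hasDerivAt_const x (-c)) ?_
    · intro t ht; exact H ht
    · intro x hx hfx
      have hb := hbound x (Set.mem_Icc_of_Ico hx)
      rw [hfx] at hb
      show f' x < 0
      nlinarith [mul_pos hn (mul_pos hc hc)]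
  have hneg : ∀ t ∈ Set.Icc δ₀ l, f t < 0 := fun t ht =>
    lt_of_le_of_lt (key t ht) (by linarith)
  -- derivative bound: f' ≤ -n f²/4
  have hb4 : ∀ t ∈ Set.Icc δ₀ l, f' t ≤ -n * (f t) ^ 2 / 4 := by
    intro t ht
    have h1 := hbound t ht
    have h2 : f t ≤ -c := key t ht
    nlinarith [sq_nonneg (f t + c), mul_pos hc hc, mul_pos hn hc]
  -- v = 1/f - (n/4) t is monotone
  set v : ℝ → ℝ := fun t => (f t)⁻¹ - n / 4 * t with hv_def
  have hvderiv : ∀ t ∈ Set.Icc δ₀ l, HasDerivAt v (-(f' t) / (f t) ^ 2 - n / 4) t := by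
    intro t ht
    have h := ((hderiv t ht).inv (hneg t ht).ne).sub ((hasDerivAt_id t).const_mul (n / 4))
    simp at h; exact h
  have hmono : MonotoneOn v (Set.Icc δ₀ l) := by
    apply monotoneOn_of_deriv_nonneg (convex_Icc δ₀ l)
    · exact fun t ht => (hvderiv t ht).continuousAt.continuousWithinAt
    · intro t ht
      rw [interior_Icc] at ht
      exact (hvderiv t (Set.mem_Icc_of_Ioo ht)).differentiableAt.differentiableWithinAt
    · intro t ht
      rw [interior_Icc] at ht
      have ht' := Set.mem_Icc_of_Ioo ht
      rw [(hvderiv t ht').deriv]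
      have hsq : (0:ℝ) < (f t) ^ 2 := pow_two_pos_of_ne_zero (hneg t ht').ne
      have h4 := hb4 t ht'
      rw [sub_nonneg, le_div_iff₀ hsq]
      nlinarith
  have hvv : v δ₀ ≤ v l :=
    hmono (Set.left_mem_Icc.mpr hδl) (Set.right_mem_Icc.mpr hδl) hδl
  have hfl : (f l)⁻¹ < 0 := inv_lt_zero.mpr (hneg l (Set.right_mem_Icc.mpr hδl))
  have hfd : -(c⁻¹) ≤ (f δ₀)⁻¹ := by
    have h1 : f δ₀ < 0 := hneg δ₀ (Set.left_mem_Icc.mpr hδl)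
    have h2 : f δ₀ ≤ -c := key δ₀ (Set.left_mem_Icc.mpr hδl)
    rw [neg_le, ← inv_neg]
    exact inv_anti₀ hc (by linarith)
  have h1 : n / 4 * (l - δ₀) ≤ c⁻¹ := by
    simp only [hv_def] at hvv
    nlinarith
  have hcc : c⁻¹ * c = 1 := inv_mul_cancel₀ hc.ne'
  have hnc : (0:ℝ) < n * c := by positivity
  have h2 : n * c * (l - δ₀) ≤ 4 := by
    nlinarith [mul_le_mul_of_nonneg_right h1 hc.le]
  have h3 : l - δ₀ ≤ 4 / (n * c) := by
    rw [le_div_iff₀ hnc]; nlinarith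
  linarith

/-- Quantitative ODE lemma behind the Symmetrization Corollary: if the scalar
curvature profile σ is ≥ σ₀ near the middle and ≥ -ε globally with ε small,
then the band half-width l is bounded. -/
theorem symmetrization_corollary_ode (n : ℕ) (hn : 2 ≤ n) (σ₀ δ₀ l ε : ℝ)
    (hσ₀ : 0 < σ₀) (hδ₀ : 0 < δ₀) (hδl : δ₀ ≤ l) (hε0 : 0 ≤ ε)
    (hε : ε ≤ (n : ℝ) * σ₀ ^ 2 * δ₀ ^ 2 / (8 * ((n : ℝ) - 1)))
    (σ : ℝ → ℝ) (hσcont : ContinuousOn σ (Set.Icc (-l) l))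
    (hσ1 : ∀ t : ℝ, |t| ≤ δ₀ → σ₀ ≤ σ t)
    (hσ2 : ∀ t ∈ Set.Icc (-l) l, -ε ≤ σ t)
    (f f' : ℝ → ℝ)
    (hderiv : ∀ t ∈ Set.Icc (-l) l, HasDerivAt f (f' t) t)
    (hcont : ContinuousOn f' (Set.Icc (-l) l))
    (hineq : ∀ t ∈ Set.Icc (-l) l,
      2 * f' t + (n : ℝ) * (f t) ^ 2 + σ t / ((n : ℝ) - 1) ≤ 0) :
    l ≤ δ₀ + 8 * ((n : ℝ) - 1) / ((n : ℝ) * σ₀ * δ₀) := by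
  have hn2 : (2:ℝ) ≤ (n:ℝ) := by exact_mod_cast hn
  set a : ℝ := (n : ℝ) - 1 with ha_def
  have ha : (0:ℝ) < a := by rw [ha_def]; linarith
  have hnpos : (0:ℝ) < (n:ℝ) := by linarith
  set c : ℝ := σ₀ * δ₀ / (2 * a) with hc_def
  have hc : 0 < c := by positivity
  -- smallness of ε
  have hεc : ε / a ≤ (n:ℝ) * c ^ 2 / 2 := by
    have hkey : (n:ℝ) * c ^ 2 / 2 = ((n:ℝ) * σ₀ ^ 2 * δ₀ ^ 2 / (8 * a)) / a := by
      rw [hc_def]; field_simp; ring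
    rw [hkey]
    gcongr
  -- global derivative bound
  have hglob : ∀ t ∈ Set.Icc (-l) l,
      f' t ≤ -(n:ℝ) * (f t) ^ 2 / 2 + (n:ℝ) * c ^ 2 / 4 := by
    intro t ht
    have h1 := hineq t ht
    have h2 := hσ2 t ht
    have h3 : -ε / a ≤ σ t / a := by gcongr
    have h4 : -ε / a = -(ε / a) := by ring
    linarith
  -- drop across the middle interval
  have hl0 : (0:ℝ) < l := lt_of_lt_of_le hδ₀ hδl
  have hsub : Set.Icc (-δ₀) δ₀ ⊆ Set.Icc (-l) l := Set.Icc_subset_Icc (by linarith) hδl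
  set K : ℝ := σ₀ / a / 2 with hK_def
  have hKδ : K * δ₀ = c := by rw [hK_def, hc_def]; field_simp
  have hgd : ∀ t ∈ Set.Icc (-δ₀) δ₀, HasDerivAt (fun s => f s + K * s) (f' t + K * 1) t :=
    fun t ht => (hderiv t (hsub ht)).add ((hasDerivAt_id t).const_mul K)
  have hanti : AntitoneOn (fun s => f s + K * s) (Set.Icc (-δ₀) δ₀) := by
    apply antitoneOn_of_deriv_nonpos (convex_Icc _ _)
    · exact fun t ht => (hgd t ht).continuousAt.continuousWithinAt
    · intro t ht
      rw [interior_Icc] at ht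
      exact (hgd t (Set.mem_Icc_of_Ioo ht)).differentiableAt.differentiableWithinAt
    · intro t ht
      rw [interior_Icc] at ht
      have ht' := Set.mem_Icc_of_Ioo ht
      rw [(hgd t ht').deriv]
      have h1 := hineq t (hsub ht')
      have h2 : σ₀ ≤ σ t := hσ1 t (abs_le.mpr ⟨ht'.1, ht'.2⟩)
      have h3 : σ₀ / a ≤ σ t / a := by gcongr
      have h5 : (0:ℝ) ≤ (n:ℝ) * (f t) ^ 2 := by positivity
      rw [hK_def]
      linarith
  have hdrop : f δ₀ + K * δ₀ ≤ f (-δ₀) + K * (-δ₀) := by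
    have hmem1 : (-δ₀) ∈ Set.Icc (-δ₀) δ₀ := ⟨le_refl _, by linarith⟩
    have hmem2 : δ₀ ∈ Set.Icc (-δ₀) δ₀ := ⟨by linarith, le_refl _⟩
    exact hanti hmem1 hmem2 (by linarith)
  have hconv : 4 / ((n:ℝ) * c) = 8 * a / ((n:ℝ) * σ₀ * δ₀) := by
    rw [hc_def]; field_simp; ring
  have hsub2 : Set.Icc δ₀ l ⊆ Set.Icc (-l) l := Set.Icc_subset_Icc (by linarith) le_rfl
  by_cases hcase : f δ₀ ≤ -c
  · have hbl := blowup_aux (n:ℝ) c δ₀ l hnpos hc hδl f f'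
      (fun t ht => hderiv t (hsub2 ht)) (fun t ht => hglob t (hsub2 ht)) hcase
    rw [hconv] at hbl
    exact hbl
  · push_neg at hcase
    have hF0 : -f (-δ₀) ≤ -c := by
      rw [hKδ] at hdrop
      have : K * (-δ₀) = -c := by rw [← hKδ]; ring
      rw [this] at hdrop
      linarith
    have hbl := blowup_aux (n:ℝ) c δ₀ l hnpos hc hδl (fun t => -f (-t)) (fun t => f' (-t))
      ?_ ?_ hF0
    · rw [hconv] at hbl
      exact hbl
    · intro t ht
      have hmem : -t ∈ Set.Icc (-l) l := ⟨by linarith [ht.2], by linarith [ht.1, hδ₀.le]⟩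
      have h := ((hderiv (-t) hmem).comp t (hasDerivAt_neg t)).neg
      simp at h; exact h
    · intro t ht
      have hmem : -t ∈ Set.Icc (-l) l := ⟨by linarith [ht.2], by linarith [ht.1, hδ₀.le]⟩
      have h := hglob (-t) hmem
      have hsq : (-f (-t)) ^ 2 = (f (-t)) ^ 2 := by ring
      rw [hsq]
      exact h
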